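/- arXiv:1301.5522 — 5 statements merged into one kernel-verified Lean document; each statement's English description precedes it below -/
import Mathlib

section
/- Let S, C, I be positive reals parameterized as S = SNR^{β_sd}, I = SNR^{β_rd}, C = SNR^{β_sr} with β_sd > 0. Then with b1 = log(1+(√I+√S)²)/log(1+S) and b2 = log(1+C+S)/log(1+S), the limit as SNR → ∞ of (log(1+S)/log(1+SNR))·(1 + (b1-1)(b2-1)/((b1-1)+(b2-1))) equals β_sd + ([β_rd-β_sd]⁺·[β_sr-β_sd]⁺)/([β_rd-β_sd]⁺ + [β_sr-β_sd]⁺), where the last fraction is interpreted as 0 when both bracketed terms are 0. -/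
open Real Filter


lemma lim_log1p_rpow (p : ℝ) (hp : 0 ≤ p) :
    Tendsto (fun x : ℝ => Real.log (1 + x ^ p) / Real.log x) atTop (nhds p) := by
  have h0 : Tendsto (fun x : ℝ => Real.log (x ^ (-p) + 1) / Real.log x) atTop (nhds 0) := by
    refine tendsto_of_tendsto_of_tendsto_of_le_of_le' tendsto_const_nhds
      (Tendsto.div_atTop (tendsto_const_nhds (x := Real.log 2)) Real.tendsto_log_atTop) ?_ ?_
    · filter_upwards [eventually_gt_atTop 1] with x hx
      have hx0 : (0:ℝ) < x := by linarith
      have : (0:ℝ) < x ^ (-p) + 1 := by positivity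
      have hlx : 0 < Real.log x := Real.log_pos hx
      have : 0 ≤ Real.log (x ^ (-p) + 1) := by
        apply Real.log_nonneg
        have : 0 ≤ x ^ (-p) := le_of_lt (Real.rpow_pos_of_pos hx0 _)
        linarith
      positivity
    · filter_upwards [eventually_gt_atTop 1] with x hx
      have hx0 : (0:ℝ) < x := by linarith
      have hlx : 0 < Real.log x := Real.log_pos hx
      have h1 : x ^ (-p) ≤ 1 := by
        apply Real.rpow_le_one_of_one_le_of_nonpos (le_of_lt hx) (by linarith)
      have : Real.log (x ^ (-p) + 1) ≤ Real.log 2 := by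
        apply Real.log_le_log (by positivity)
        linarith
      exact div_le_div_of_nonneg_right this hlx.le
  have heq : ∀ᶠ x : ℝ in atTop,
      Real.log (1 + x ^ p) / Real.log x = p + Real.log (x ^ (-p) + 1) / Real.log x := by
    filter_upwards [eventually_gt_atTop 1] with x hx
    have hx0 : (0:ℝ) < x := by linarith
    have hlx : Real.log x ≠ 0 := ne_of_gt (Real.log_pos hx)
    have hfac : 1 + x ^ p = x ^ p * (x ^ (-p) + 1) := by
      rw [mul_add, mul_one, ← Real.rpow_add hx0]
      simp [add_comm]
    rw [hfac, Real.log_mul (ne_of_gt (Real.rpow_pos_of_pos hx0 _))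
        (by positivity), Real.log_rpow hx0, add_div, mul_div_assoc, div_self hlx, mul_one]
  have := (tendsto_const_nhds.add h0 : Tendsto (fun x : ℝ => p + Real.log (x ^ (-p) + 1) / Real.log x) atTop (nhds (p + 0)))
  rw [add_zero] at this
  exact Tendsto.congr' (heq.mono fun _ h => h.symm) this

lemma lim_log_squeeze (p : ℝ) (hp : 0 ≤ p) (f : ℝ → ℝ) (K : ℝ) (hK : 1 ≤ K)
    (hf : ∀ᶠ x : ℝ in atTop, 1 + x ^ p ≤ f x ∧ f x ≤ K * (1 + x ^ p)) :
    Tendsto (fun x : ℝ => Real.log (f x) / Real.log x) atTop (nhds p) := by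
  refine tendsto_of_tendsto_of_tendsto_of_le_of_le'
    (h := fun x => Real.log K / Real.log x + Real.log (1 + x ^ p) / Real.log x)
    (lim_log1p_rpow p hp) ?_ ?_ ?_
  · -- upper bound function: (log K + log(1+x^p))/log x → 0 + p
    have : Tendsto (fun x : ℝ => Real.log K / Real.log x + Real.log (1 + x ^ p) / Real.log x)
        atTop (nhds (0 + p)) :=
      (Tendsto.div_atTop tendsto_const_nhds Real.tendsto_log_atTop).add (lim_log1p_rpow p hp)
    rw [zero_add] at this
    exact this
  · filter_upwards [eventually_gt_atTop 1, hf] with x hx hfx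
    have hx0 : (0:ℝ) < x := by linarith
    have hlx : 0 < Real.log x := Real.log_pos hx
    have hpos : (0:ℝ) < 1 + x ^ p := by
      have := Real.rpow_pos_of_pos hx0 p; linarith
    exact div_le_div_of_nonneg_right (Real.log_le_log hpos hfx.1) hlx.le
  · filter_upwards [eventually_gt_atTop 1, hf] with x hx hfx
    have hx0 : (0:ℝ) < x := by linarith
    have hlx : 0 < Real.log x := Real.log_pos hx
    have hpos : (0:ℝ) < 1 + x ^ p := by
      have := Real.rpow_pos_of_pos hx0 p; linarith
    have hfpos : 0 < f x := lt_of_lt_of_le hpos hfx.1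
    have : Real.log (f x) ≤ Real.log K + Real.log (1 + x ^ p) := by
      calc Real.log (f x) ≤ Real.log (K * (1 + x ^ p)) := Real.log_le_log hfpos hfx.2
        _ = Real.log K + Real.log (1 + x ^ p) := Real.log_mul (by linarith) (ne_of_gt hpos)
    calc Real.log (f x) / Real.log x ≤ (Real.log K + Real.log (1 + x ^ p)) / Real.log x :=
          div_le_div_of_nonneg_right this hlx.le
      _ = _ := add_div _ _ _

lemma lim_div_log (f g : ℝ → ℝ) (a b : ℝ) (hb : b ≠ 0)
    (hf : Tendsto (fun x => f x / Real.log x) atTop (nhds a))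
    (hg : Tendsto (fun x => g x / Real.log x) atTop (nhds b)) :
    Tendsto (fun x => f x / g x) atTop (nhds (a / b)) := by
  refine (hf.div hg hb).congr' ?_
  filter_upwards [eventually_gt_atTop 1] with x hx
  exact div_div_div_cancel_right₀ (ne_of_gt (Real.log_pos hx)) _ _

-- prefactor
lemma lim_pre (βsd : ℝ) (hsd : 0 < βsd) :
    Tendsto (fun x : ℝ => Real.log (1 + x ^ βsd) / Real.log (1 + x)) atTop (nhds βsd) := by
  have h1 : Tendsto (fun x : ℝ => Real.log (1 + x) / Real.log x) atTop (nhds 1) := by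
    have := lim_log1p_rpow 1 zero_le_one
    refine this.congr (fun x => by rw [Real.rpow_one])
  have := lim_div_log _ _ βsd 1 one_ne_zero (lim_log1p_rpow βsd hsd.le) h1
  rw [div_one] at this
  exact this

lemma lim_b1 (βsd βrd : ℝ) (hsd : 0 < βsd) (hrd : 0 ≤ βrd) :
    Tendsto (fun x : ℝ => Real.log (1 + (Real.sqrt (x ^ βrd) + Real.sqrt (x ^ βsd)) ^ 2)
      / Real.log (1 + x ^ βsd)) atTop (nhds (max βrd βsd / βsd)) := by
  set m := max βrd βsd with hm
  have hm0 : 0 ≤ m := le_trans hsd.le (le_max_right _ _)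
  refine lim_div_log _ _ m βsd (ne_of_gt hsd) ?_ (lim_log1p_rpow βsd hsd.le)
  refine lim_log_squeeze m hm0 _ 4 (by norm_num) ?_
  filter_upwards [eventually_gt_atTop 1] with x hx
  have hx0 : (0:ℝ) < x := by linarith
  have hbm : x ^ βsd ≤ x ^ m := Real.rpow_le_rpow_of_exponent_le hx.le (le_max_right _ _)
  have ham : x ^ βrd ≤ x ^ m := Real.rpow_le_rpow_of_exponent_le hx.le (le_max_left _ _)
  have hrpos : ∀ q : ℝ, (0:ℝ) < x ^ q := fun q => Real.rpow_pos_of_pos hx0 q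
  have hsq : ∀ q : ℝ, Real.sqrt (x ^ q) ^ 2 = x ^ q := fun q => Real.sq_sqrt (hrpos q).le
  constructor
  · -- lower: x^m ≤ (√a+√b)^2 where {a,b} attains max
    have : x ^ m ≤ (Real.sqrt (x ^ βrd) + Real.sqrt (x ^ βsd)) ^ 2 := by
      rcases max_cases βrd βsd with ⟨he, _⟩ | ⟨he, _⟩ <;> rw [hm, he]
      · calc x ^ βrd = Real.sqrt (x ^ βrd) ^ 2 := (hsq βrd).symm
          _ ≤ _ := by
            apply pow_le_pow_left₀ (Real.sqrt_nonneg _)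
            have := Real.sqrt_nonneg (x ^ βsd); linarith
      · calc x ^ βsd = Real.sqrt (x ^ βsd) ^ 2 := (hsq βsd).symm
          _ ≤ _ := by
            apply pow_le_pow_left₀ (Real.sqrt_nonneg _)
            have := Real.sqrt_nonneg (x ^ βrd); linarith
    linarith
  · -- upper: (√a+√b)^2 ≤ 4 x^m
    have hs1 : Real.sqrt (x ^ βrd) ≤ Real.sqrt (x ^ m) := Real.sqrt_le_sqrt ham
    have hs2 : Real.sqrt (x ^ βsd) ≤ Real.sqrt (x ^ m) := Real.sqrt_le_sqrt hbm
    have : (Real.sqrt (x ^ βrd) + Real.sqrt (x ^ βsd)) ^ 2 ≤ (2 * Real.sqrt (x ^ m)) ^ 2 := by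
      apply pow_le_pow_left₀ (by positivity)
      linarith
    have h4 : (2 * Real.sqrt (x ^ m)) ^ 2 = 4 * x ^ m := by
      rw [mul_pow, hsq m]; norm_num
    have hmpos := hrpos m
    nlinarith [this]

lemma lim_b2 (βsd βsr : ℝ) (hsd : 0 < βsd) (hsr : 0 ≤ βsr) :
    Tendsto (fun x : ℝ => Real.log (1 + x ^ βsr + x ^ βsd)
      / Real.log (1 + x ^ βsd)) atTop (nhds (max βsr βsd / βsd)) := by
  set m := max βsr βsd with hm
  have hm0 : 0 ≤ m := le_trans hsd.le (le_max_right _ _)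
  refine lim_div_log _ _ m βsd (ne_of_gt hsd) ?_ (lim_log1p_rpow βsd hsd.le)
  refine lim_log_squeeze m hm0 _ 2 (by norm_num) ?_
  filter_upwards [eventually_gt_atTop 1] with x hx
  have hx0 : (0:ℝ) < x := by linarith
  have hbm : x ^ βsd ≤ x ^ m := Real.rpow_le_rpow_of_exponent_le hx.le (le_max_right _ _)
  have ham : x ^ βsr ≤ x ^ m := Real.rpow_le_rpow_of_exponent_le hx.le (le_max_left _ _)
  have hrpos : ∀ q : ℝ, (0:ℝ) < x ^ q := fun q => Real.rpow_pos_of_pos hx0 q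
  constructor
  · rcases max_cases βsr βsd with ⟨he, _⟩ | ⟨he, _⟩ <;> rw [hm, he] <;>
      [have := (hrpos βsd).le; have := (hrpos βsr).le] <;> linarith
  · have := hrpos m; linarith

/-- gDoF upper bound of the Gaussian HD relay channel from the cut-set bound. -/
theorem gdof_cutset_limit (βsd βrd βsr : ℝ) (hsd : 0 < βsd)
    (hrd : 0 ≤ βrd) (hsr : 0 ≤ βsr) :
    Tendsto (fun SNR : ℝ =>
      (Real.log (1 + SNR ^ βsd) / Real.log (1 + SNR)) *
        (1 + ((Real.log (1 + (Real.sqrt (SNR ^ βrd) + Real.sqrt (SNR ^ βsd)) ^ 2)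
                / Real.log (1 + SNR ^ βsd)) - 1) *
             ((Real.log (1 + SNR ^ βsr + SNR ^ βsd)
                / Real.log (1 + SNR ^ βsd)) - 1) /
            (((Real.log (1 + (Real.sqrt (SNR ^ βrd) + Real.sqrt (SNR ^ βsd)) ^ 2)
                / Real.log (1 + SNR ^ βsd)) - 1) +
             ((Real.log (1 + SNR ^ βsr + SNR ^ βsd)
                / Real.log (1 + SNR ^ βsd)) - 1))))
      atTop
      (nhds (βsd + (max (βrd - βsd) 0 * max (βsr - βsd) 0) /
        (max (βrd - βsd) 0 + max (βsr - βsd) 0))) := by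
  set A := max (βrd - βsd) 0 with hA
  set B := max (βsr - βsd) 0 with hB
  have hA0 : 0 ≤ A := le_max_right _ _
  have hB0 : 0 ≤ B := le_max_right _ _
  have hm1 : max βrd βsd / βsd - 1 = A / βsd := by
    rw [hA, div_sub_one (ne_of_gt hsd)]
    congr 1
    rcases le_total βrd βsd with h | h
    · rw [max_eq_right h, max_eq_right (by linarith), sub_self]
    · rw [max_eq_left h, max_eq_left (by linarith)]
  have hm2 : max βsr βsd / βsd - 1 = B / βsd := by
    rw [hB, div_sub_one (ne_of_gt hsd)]
    congr 1
    rcases le_total βsr βsd with h | h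
    · rw [max_eq_right h, max_eq_right (by linarith), sub_self]
    · rw [max_eq_left h, max_eq_left (by linarith)]
  have hpre := lim_pre βsd hsd
  have hb1 := (lim_b1 βsd βrd hsd hrd).sub (tendsto_const_nhds (x := (1:ℝ)))
  have hb2 := (lim_b2 βsd βsr hsd hsr).sub (tendsto_const_nhds (x := (1:ℝ)))
  rw [hm1] at hb1
  rw [hm2] at hb2
  by_cases hAB : A + B = 0
  · -- degenerate case: A = B = 0
    have hA' : A = 0 := by linarith [hB0, hA0]
    have hB' : B = 0 := by linarith [hB0, hA0]
    rw [hA', zero_div] at hb1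
    rw [hA', hB']
    simp only [mul_zero, zero_mul, add_zero, zero_div, zero_add]
    -- t → 0 by squeeze
    have ht : Tendsto (fun SNR : ℝ =>
        ((Real.log (1 + (Real.sqrt (SNR ^ βrd) + Real.sqrt (SNR ^ βsd)) ^ 2)
                / Real.log (1 + SNR ^ βsd)) - 1) *
             ((Real.log (1 + SNR ^ βsr + SNR ^ βsd)
                / Real.log (1 + SNR ^ βsd)) - 1) /
            (((Real.log (1 + (Real.sqrt (SNR ^ βrd) + Real.sqrt (SNR ^ βsd)) ^ 2)
                / Real.log (1 + SNR ^ βsd)) - 1) +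
             ((Real.log (1 + SNR ^ βsr + SNR ^ βsd)
                / Real.log (1 + SNR ^ βsd)) - 1))) atTop (nhds 0) := by
      refine tendsto_of_tendsto_of_tendsto_of_le_of_le' tendsto_const_nhds hb1 ?_ ?_
      all_goals
      · filter_upwards [eventually_gt_atTop 1] with x hx
        have hx0 : (0:ℝ) < x := by linarith
        have hrpos : ∀ q : ℝ, (0:ℝ) < x ^ q := fun q => Real.rpow_pos_of_pos hx0 q
        have hden : 0 < Real.log (1 + x ^ βsd) := by
          apply Real.log_pos; have := hrpos βsd; linarith
        set a := (Real.log (1 + (Real.sqrt (x ^ βrd) + Real.sqrt (x ^ βsd)) ^ 2)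
                / Real.log (1 + x ^ βsd)) - 1 with ha
        set b := (Real.log (1 + x ^ βsr + x ^ βsd)
                / Real.log (1 + x ^ βsd)) - 1 with hbdef
        have ha0 : 0 ≤ a := by
          rw [ha, sub_nonneg, le_div_iff₀ hden, one_mul]
          apply Real.log_le_log (by have := hrpos βsd; linarith)
          have h1 : x ^ βsd = Real.sqrt (x ^ βsd) ^ 2 := (Real.sq_sqrt (hrpos βsd).le).symm
          have h2 : Real.sqrt (x ^ βsd) ^ 2 ≤ (Real.sqrt (x ^ βrd) + Real.sqrt (x ^ βsd)) ^ 2 := by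
            apply pow_le_pow_left₀ (Real.sqrt_nonneg _)
            have := Real.sqrt_nonneg (x ^ βrd); linarith
          linarith [h1 ▸ h2]
        have hb0 : 0 ≤ b := by
          rw [hbdef, sub_nonneg, le_div_iff₀ hden, one_mul]
          apply Real.log_le_log (by have := hrpos βsd; linarith)
          have := hrpos βsr; linarith
        first
        | exact div_nonneg (mul_nonneg ha0 hb0) (by linarith)
        | { -- upper bound: a*b/(a+b) ≤ a
            rcases eq_or_lt_of_le (by linarith : (0:ℝ) ≤ a + b) with h | h
            · rw [← h, div_zero]; exact ha0
            · rw [div_le_iff₀ h]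
              nlinarith }
    have := hpre.mul ((tendsto_const_nhds (x := (1:ℝ))).add ht)
    rw [add_zero, mul_one] at this
    exact this
  · -- nondegenerate: A + B > 0
    have hsum : A / βsd + B / βsd ≠ 0 := by
      rw [← add_div]
      exact div_ne_zero hAB (ne_of_gt hsd)
    have ht := (hb1.mul hb2).div (hb1.add hb2) hsum
    have := hpre.mul ((tendsto_const_nhds (x := (1:ℝ))).add ht)
    have hval : βsd * (1 + A / βsd * (B / βsd) / (A / βsd + B / βsd)) = βsd + A * B / (A + B) := by
      field_simp
    rw [hval] at this
    exact this
end

section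
/- The function f(γ) = H(γ) + (1-γ)·log₂(1/(1-γ)) on [0,1), where H(γ) = -γ log₂ γ - (1-γ) log₂(1-γ) is the binary entropy function, attains its maximum value of at most 1.5112 bits and, in particular, max_{γ∈[0,1]} f(γ) ≤ 1.6 bits. -/
open Real

/-- Tangent-type bound: `-x log x ≤ -x log c + c - x` for `x ≥ 0`, `c > 0`. -/
lemma neg_mul_log_le {x c : ℝ} (hx : 0 ≤ x) (hc : 0 < c) :
    -(x * Real.log x) ≤ -(x * Real.log c) + c - x := by
  rcases eq_or_lt_of_le hx with h | h
  · simp [← h]; positivity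
  · have h1 : Real.log (c / x) ≤ c / x - 1 := Real.log_le_sub_one_of_pos (by positivity)
    rw [Real.log_div hc.ne' h.ne'] at h1
    have := mul_le_mul_of_nonneg_left h1 hx
    rw [mul_sub, mul_sub, mul_div_cancel₀ _ h.ne'] at this
    nlinarith

/-- Two-sided series bounds for `log (1 - x)`. -/
lemma log_one_sub_bounds {x : ℝ} (h0 : 0 ≤ x) (h1 : x < 1) :
    -(∑ i ∈ Finset.range 8, x ^ (i + 1) / (i + 1)) - x ^ 9 / (1 - x) ≤ Real.log (1 - x) ∧
    Real.log (1 - x) ≤ -(∑ i ∈ Finset.range 8, x ^ (i + 1) / (i + 1)) + x ^ 9 / (1 - x) := by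
  have hx : |x| < 1 := by rw [abs_of_nonneg h0]; exact h1
  have h := Real.abs_log_sub_add_sum_range_le hx 8
  rw [abs_of_nonneg h0] at h
  have h' := abs_le.1 h
  constructor <;> [linarith [h'.1]; linarith [h'.2]]

lemma log_c1_ge : Real.log (55013/100000 : ℝ) ≥ -(59761/100000) := by
  have hx0 : (0:ℝ) ≤ 5013/55013 := by norm_num
  have hx1 : (5013/55013 : ℝ) < 1 := by norm_num
  have h := (log_one_sub_bounds hx0 hx1).2
  rw [Finset.sum_range_succ, Finset.sum_range_succ, Finset.sum_range_succ,
    Finset.sum_range_succ, Finset.sum_range_succ, Finset.sum_range_succ,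
    Finset.sum_range_succ, Finset.sum_range_succ, Finset.sum_range_zero] at h
  have heq : (55013/100000 : ℝ) = (1 - 5013/55013)⁻¹ / 2 := by norm_num
  rw [heq, Real.log_div (by norm_num) (by norm_num), Real.log_inv]
  have h2 := Real.log_two_lt_d9
  norm_num at h h2 ⊢
  linarith

lemma log_c2_ge : Real.log (44987/100000 : ℝ) ≥ -(798805/1000000) := by
  have hx0 : (0:ℝ) ≤ 5013/50000 := by norm_num
  have hx1 : (5013/50000 : ℝ) < 1 := by norm_num
  have h := (log_one_sub_bounds hx0 hx1).1
  rw [Finset.sum_range_succ, Finset.sum_range_succ, Finset.sum_range_succ,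
    Finset.sum_range_succ, Finset.sum_range_succ, Finset.sum_range_succ,
    Finset.sum_range_succ, Finset.sum_range_succ, Finset.sum_range_zero] at h
  have heq : (44987/100000 : ℝ) = (1 - 5013/50000) / 2 := by norm_num
  rw [heq, Real.log_div (by norm_num) (by norm_num)]
  have h2 := Real.log_two_lt_d9
  norm_num at h h2 ⊢
  linarith

/-- Binary entropy function in bits. -/
noncomputable def binH (γ : ℝ) : ℝ := -γ * Real.logb 2 γ - (1 - γ) * Real.logb 2 (1 - γ)

/-- The function H(γ) + (1-γ)log₂(1/(1-γ)) is at most 1.5112 bits on [0,1],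
in particular at most 1.6 bits. -/
theorem entropy_gap_bound :
    (∀ γ ∈ Set.Icc (0:ℝ) 1,
      binH γ + (1 - γ) * Real.logb 2 (1 / (1 - γ)) ≤ 1.5112) ∧
    (∀ γ ∈ Set.Icc (0:ℝ) 1,
      binH γ + (1 - γ) * Real.logb 2 (1 / (1 - γ)) ≤ 1.6) := by
  have key : ∀ γ ∈ Set.Icc (0:ℝ) 1,
      binH γ + (1 - γ) * Real.logb 2 (1 / (1 - γ)) ≤ 1.5112 := by
    rintro γ ⟨hγ0, hγ1⟩
    have ht0 : (0:ℝ) ≤ 1 - γ := by linarith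
    have hE : binH γ + (1 - γ) * Real.logb 2 (1 / (1 - γ))
        = (-(γ * Real.log γ) + 2 * (-((1 - γ) * Real.log (1 - γ)))) / Real.log 2 := by
      rw [binH, one_div, Real.logb_inv]
      unfold Real.logb
      ring
    rw [hE]
    have hlog2 := Real.log_two_gt_d9
    rw [div_le_iff₀ (by norm_num at hlog2 ⊢; linarith : (0:ℝ) < Real.log 2)]
    have A := neg_mul_log_le hγ0 (show (0:ℝ) < 55013/100000 by norm_num)
    have B := neg_mul_log_le ht0 (show (0:ℝ) < 44987/100000 by norm_num)
    have M1 : γ * (-(59761/100000) : ℝ) ≤ γ * Real.log (55013/100000) :=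
      mul_le_mul_of_nonneg_left log_c1_ge hγ0
    have M2 : (1 - γ) * (-(798805/1000000) : ℝ) ≤ (1 - γ) * Real.log (44987/100000) :=
      mul_le_mul_of_nonneg_left log_c2_ge ht0
    norm_num at hlog2 A B M1 M2 ⊢
    linarith
  refine ⟨key, fun γ hγ => le_trans (key γ hγ) (by norm_num)⟩
end

section
/- For any γ ∈ [0,1] and positive reals subject to P_{s,0}, and channel gains C, S > 0: γ·log₂((1 + C·P_{s,0} + S·P_{s,0})/(1 + max{C,S}·P_{s,0})) ≤ γ·log₂ 2 ≤ 1 bit; combined with H(γ) ≤ 1, the gap between the cut-set bound with terms I_3 = log(1+(C+S)P_{s,0}) and the PDF inner bound with I_7 = log(1+max{C,S}P_{s,0}) is at most 1 bit. -/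
open Real

lemma binH_eq (γ : ℝ) : binH γ = Real.binEntropy γ / Real.log 2 := by
  unfold binH Real.binEntropy
  rw [Real.logb, Real.logb]
  rcases eq_or_ne γ 0 with h | h
  · simp [h]
  rcases eq_or_ne γ 1 with h1 | h1
  · simp [h1]
  have hg : γ⁻¹ ≠ 0 := inv_ne_zero h
  have hg1 : (1 - γ)⁻¹ ≠ 0 := inv_ne_zero (sub_ne_zero.mpr h1.symm)
  rw [Real.log_inv, Real.log_inv]
  ring

/-- 1-bit gap for PDF with deterministic switch. -/
theorem pdf_det_switch_one_bit (γ P C S : ℝ) (hγ : γ ∈ Set.Icc (0:ℝ) 1)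
    (hP : 0 < P) (hC : 0 < C) (hS : 0 < S) :
    γ * Real.logb 2 ((1 + C * P + S * P) / (1 + max C S * P)) ≤ γ * Real.logb 2 2 ∧
    γ * Real.logb 2 2 ≤ 1 ∧
    max (binH γ)
      (γ * (Real.logb 2 (1 + (C + S) * P) - Real.logb 2 (1 + max C S * P))) ≤ 1 := by
  obtain ⟨hγ0, hγ1⟩ := hγ
  have hmaxpos : 0 < 1 + max C S * P := by positivity
  have hnum : (0:ℝ) < 1 + C * P + S * P := by positivity
  have hkey : 1 + C * P + S * P ≤ 2 * (1 + max C S * P) := by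
    rcases le_total C S with h | h
    · have : C * P ≤ S * P := mul_le_mul_of_nonneg_right h hP.le
      rw [max_eq_right h]; nlinarith
    · have : S * P ≤ C * P := mul_le_mul_of_nonneg_right h hP.le
      rw [max_eq_left h]; nlinarith
  have hratio : (1 + C * P + S * P) / (1 + max C S * P) ≤ 2 := by
    rw [div_le_iff₀ hmaxpos]; linarith
  have hlog : Real.logb 2 ((1 + C * P + S * P) / (1 + max C S * P)) ≤ Real.logb 2 2 :=
    (Real.logb_le_logb (by norm_num) (by positivity) (by norm_num)).mpr hratio
  refine ⟨mul_le_mul_of_nonneg_left hlog hγ0, ?_, ?_⟩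
  · rw [Real.logb_self_eq_one (by norm_num)]; linarith
  · apply max_le
    · rw [binH_eq, div_le_one (Real.log_pos (by norm_num))]
      exact Real.binEntropy_le_log_two
    · have : Real.logb 2 (1 + (C + S) * P) - Real.logb 2 (1 + max C S * P)
          = Real.logb 2 ((1 + C * P + S * P) / (1 + max C S * P)) := by
        rw [Real.logb_div (by positivity) (by positivity)]; ring_nf
      rw [this]
      calc γ * Real.logb 2 ((1 + C * P + S * P) / (1 + max C S * P))
          ≤ γ * Real.logb 2 2 := mul_le_mul_of_nonneg_left hlog hγ0
        _ ≤ 1 := by rw [Real.logb_self_eq_one (by norm_num)]; linarith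
end

section
/- For a positive semidefinite Hermitian matrix K, matrix H (of compatible dimensions), and scalar a > 0: log det(I + a·H K Hᴴ) ≤ Rank(H)·log(max{1, a·Trace(K)}) + log det(I + H Hᴴ). -/
open Matrix
open scoped ComplexOrder

lemma aux_det_one_add_smul {k : ℕ} {A : Matrix (Fin k) (Fin k) ℂ} (hA : A.IsHermitian) (r : ℝ) :
    (1 + (r : ℂ) • A).det = ((∏ i, (1 + r * hA.eigenvalues i) : ℝ) : ℂ) := by
  set U : Matrix (Fin k) (Fin k) ℂ := (hA.eigenvectorUnitary : Matrix (Fin k) (Fin k) ℂ) with hUdef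
  have hU1 : U * star U = 1 := (Matrix.mem_unitaryGroup_iff).mp hA.eigenvectorUnitary.2
  have hU2 : star U * U = 1 := (Matrix.mem_unitaryGroup_iff').mp hA.eigenvectorUnitary.2
  have key : 1 + (r : ℂ) • A
      = U * diagonal (fun i => ((1 + r * hA.eigenvalues i : ℝ) : ℂ)) * star U := by
    have hdiag : diagonal (fun i => ((1 + r * hA.eigenvalues i : ℝ) : ℂ))
        = 1 + (r : ℂ) • diagonal (RCLike.ofReal ∘ hA.eigenvalues) := by
      rw [← diagonal_one, ← diagonal_smul, diagonal_add]
      funext i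
      simp
    rw [hdiag, mul_add, add_mul, mul_one, hU1, Matrix.mul_smul, Matrix.smul_mul]
    conv_lhs => rw [hA.spectral_theorem, Unitary.conjStarAlgAut_apply]
  rw [key, det_mul, det_mul, mul_comm, ← mul_assoc, ← det_mul, hU2, det_one, one_mul,
    det_diagonal]
  push_cast
  rfl

lemma aux_one_le_det_one_add {k : ℕ} {W : Matrix (Fin k) (Fin k) ℂ} (hW : W.PosSemidef) :
    ∃ q : ℝ, 1 ≤ q ∧ (1 + W).det = (q : ℂ) := by
  refine ⟨∏ i, (1 + 1 * hW.1.eigenvalues i), ?_, ?_⟩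
  · have h := Finset.prod_le_prod (s := Finset.univ) (f := fun _ : Fin k => (1:ℝ))
      (g := fun i => 1 + 1 * hW.1.eigenvalues i) (fun i _ => by norm_num)
      (fun i _ => by have := hW.eigenvalues_nonneg i; linarith)
    simpa using h
  · have := aux_det_one_add_smul hW.1 1
    simpa using this

lemma aux_det_re_mono {k : ℕ} (P W : Matrix (Fin k) (Fin k) ℂ)
    (hP : P.PosDef) (hW : W.PosSemidef) : P.det.re ≤ ((P + W).det).re := by
  open scoped MatrixOrder Matrix.Norms.L2Operator in
  set S := CFC.sqrt P with hSdef
  open scoped MatrixOrder Matrix.Norms.L2Operator in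
  have hSps : S.PosSemidef := (CFC.sqrt_nonneg P).posSemidef
  open scoped MatrixOrder Matrix.Norms.L2Operator in
  have hSS : S * S = P := CFC.sqrt_mul_sqrt_self P hP.posSemidef.nonneg
  have hdetP : (0 : ℂ) < P.det := hP.det_pos
  have hdS : S.det ≠ 0 := by
    intro h
    have : P.det = 0 := by rw [← hSS, det_mul, h, mul_zero]
    rw [this] at hdetP
    exact lt_irrefl _ hdetP
  have h1 : S * S⁻¹ = 1 := mul_nonsing_inv S (isUnit_iff_ne_zero.mpr hdS)
  have h2 : S⁻¹ * S = 1 := nonsing_inv_mul S (isUnit_iff_ne_zero.mpr hdS)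
  have hSinvH : S⁻¹.IsHermitian := hSps.1.inv
  have hV : (S⁻¹ * W * S⁻¹).PosSemidef := by
    have := hW.mul_mul_conjTranspose_same S⁻¹
    rwa [hSinvH.eq] at this
  have hid : P + W = S * (1 + S⁻¹ * W * S⁻¹) * S := by
    rw [mul_add, mul_one, add_mul, hSS]
    congr 1
    calc W = (S * S⁻¹) * W * (S⁻¹ * S) := by rw [h1, h2, Matrix.one_mul, Matrix.mul_one]
    _ = S * (S⁻¹ * W * S⁻¹) * S := by simp only [Matrix.mul_assoc]
  obtain ⟨q, hq1, hq⟩ := aux_one_le_det_one_add hV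
  have hp : P.det = ((P.det.re : ℝ) : ℂ) := by
    apply Complex.ext <;> simp [(Complex.lt_def.mp hdetP).2.symm]
  have hpre : (0 : ℝ) < P.det.re := (Complex.lt_def.mp hdetP).1
  have hSSdet : S.det * S.det = P.det := by rw [← det_mul, hSS]
  have : (P + W).det = ((P.det.re * q : ℝ) : ℂ) := by
    rw [hid, det_mul, det_mul, hq]
    rw [show S.det * (q:ℂ) * S.det = (S.det * S.det) * (q:ℂ) from by ring, hSSdet,
      Complex.ofReal_mul, ← hp]
  rw [this]
  simp only [Complex.ofReal_re]
  nlinarith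

lemma aux_smul_psd {k : ℕ} {W : Matrix (Fin k) (Fin k) ℂ} (hW : W.PosSemidef)
    {r : ℝ} (hr : 0 ≤ r) : ((r : ℂ) • W).PosSemidef := by
  constructor
  · rw [Matrix.IsHermitian, conjTranspose_smul, hW.1.eq]
    simp
  · intro x
    exact (hW.smul (Complex.zero_le_real.mpr hr)).2 x

/-- log det(I + a·H K Hᴴ) ≤ Rank(H)·log(max{1, a·Tr K}) + log det(I + H Hᴴ)
for PSD K and a > 0. -/
theorem logdet_trace_rank_bound {m n : ℕ}
    (K : Matrix (Fin n) (Fin n) ℂ) (hK : K.PosSemidef)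
    (H : Matrix (Fin m) (Fin n) ℂ) (a : ℝ) (ha : 0 < a) :
    Real.log ((1 + (a : ℂ) • (H * K * Hᴴ)).det).re
      ≤ (H.rank : ℝ) * Real.log (max 1 (a * K.trace.re))
        + Real.log ((1 + H * Hᴴ).det).re := by
  classical
  have hMpsd : (H * Hᴴ).PosSemidef := posSemidef_self_mul_conjTranspose H
  set μ : Fin m → ℝ := hMpsd.1.eigenvalues with hμdef
  set lam : Fin n → ℝ := hK.1.eigenvalues with hlamdef
  have hlam0 : ∀ i, 0 ≤ lam i := hK.eigenvalues_nonneg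
  have hμ0 : ∀ i, 0 ≤ μ i := hMpsd.eigenvalues_nonneg
  -- trace = sum of eigenvalues
  have htr : K.trace = ((∑ i, lam i : ℝ) : ℂ) := by
    conv_lhs => rw [hK.1.spectral_theorem, Unitary.conjStarAlgAut_apply]
    rw [Matrix.trace_mul_cycle, (Matrix.mem_unitaryGroup_iff').mp hK.1.eigenvectorUnitary.2,
      Matrix.one_mul, trace_diagonal]
    push_cast
    rfl
  have htre : K.trace.re = ∑ i, lam i := by rw [htr]; simp
  set t : ℝ := ∑ i, lam i with htdef
  have ht0 : 0 ≤ t := Finset.sum_nonneg fun i _ => hlam0 i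
  have hlamt : ∀ i, lam i ≤ t := fun i =>
    Finset.single_le_sum (fun j _ => hlam0 j) (Finset.mem_univ i)
  set c : ℝ := a * t with hcdef
  have hc0 : 0 ≤ c := mul_nonneg ha.le ht0
  -- the PSD slack matrix
  set D : Matrix (Fin n) (Fin n) ℂ :=
    (hK.1.eigenvectorUnitary : Matrix (Fin n) (Fin n) ℂ)
      * diagonal (fun i => ((a * (t - lam i) : ℝ) : ℂ))
      * star (hK.1.eigenvectorUnitary : Matrix (Fin n) (Fin n) ℂ) with hDdef
  have hDpsd : D.PosSemidef := by
    have hdiag : (diagonal (fun i => ((a * (t - lam i) : ℝ) : ℂ))).PosSemidef :=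
      posSemidef_diagonal_iff.mpr fun i => Complex.zero_le_real.mpr
        (mul_nonneg ha.le (by have := hlamt i; linarith))
    exact hdiag.mul_mul_conjTranspose_same _
  have hDeq : D = ((c : ℝ) : ℂ) • 1 - (a : ℂ) • K := by
    have hdiag : diagonal (fun i => ((a * (t - lam i) : ℝ) : ℂ))
        = ((c : ℝ) : ℂ) • 1 - (a : ℂ) • diagonal (RCLike.ofReal ∘ hK.1.eigenvalues) := by
      rw [← diagonal_one, ← diagonal_smul, ← diagonal_smul, diagonal_sub]
      funext i
      simp [hcdef]
      ring_nf
      rfl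
    rw [hDdef, hdiag, mul_sub, sub_mul, Matrix.mul_smul, Matrix.mul_smul, Matrix.smul_mul,
      Matrix.smul_mul, Matrix.mul_one,
      (Matrix.mem_unitaryGroup_iff).mp hK.1.eigenvectorUnitary.2, ← Unitary.conjStarAlgAut_apply (S := ℂ), ← hK.1.spectral_theorem]
  set Wd : Matrix (Fin m) (Fin m) ℂ := H * D * Hᴴ with hWdef
  have hWpsd : Wd.PosSemidef := hDpsd.mul_mul_conjTranspose_same H
  -- the identity
  have hident : (1 + (a : ℂ) • (H * K * Hᴴ)) + Wd = 1 + ((c : ℝ) : ℂ) • (H * Hᴴ) := by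
    rw [hWdef, hDeq, Matrix.mul_sub, Matrix.sub_mul, Matrix.mul_smul, Matrix.mul_smul,
      Matrix.smul_mul, Matrix.smul_mul, Matrix.mul_one]
    abel
  -- positivity of left side
  have hNpsd : ((a : ℂ) • (H * K * Hᴴ)).PosSemidef :=
    aux_smul_psd (hK.mul_mul_conjTranspose_same H) ha.le
  have hPdef : (1 + (a : ℂ) • (H * K * Hᴴ)).PosDef :=
    Matrix.PosDef.one.add_posSemidef hNpsd
  have hLpos : (0 : ℝ) < ((1 + (a : ℂ) • (H * K * Hᴴ)).det).re :=
    (Complex.lt_def.mp hPdef.det_pos).1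
  -- step 1: monotonicity
  have step1 : ((1 + (a : ℂ) • (H * K * Hᴴ)).det).re
      ≤ ((1 + ((c : ℝ) : ℂ) • (H * Hᴴ)).det).re := by
    have := aux_det_re_mono _ Wd hPdef hWpsd
    rwa [hident] at this
  -- step 2: determinant formulas
  have step2 : ((1 + ((c : ℝ) : ℂ) • (H * Hᴴ)).det).re = ∏ i, (1 + c * μ i) := by
    rw [aux_det_one_add_smul hMpsd.1 c, Complex.ofReal_re]
  have step3 : ((1 + H * Hᴴ).det).re = ∏ i, (1 + μ i) := by
    have := aux_det_one_add_smul hMpsd.1 1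
    simp only [Complex.ofReal_one, one_smul, one_mul] at this
    rw [this, Complex.ofReal_re]
  -- rank
  set r : ℕ := Fintype.card {i // μ i ≠ 0} with hrdef
  have hrank : H.rank = r := by
    rw [← Matrix.rank_self_mul_conjTranspose H, hMpsd.1.rank_eq_card_non_zero_eigs]
  -- step 4: product inequality
  have hp1pos : (0 : ℝ) < ∏ i, (1 + μ i) :=
    Finset.prod_pos fun i _ => by have := hμ0 i; linarith
  have hmax1 : (1 : ℝ) ≤ max 1 c := le_max_left _ _
  have step4 : ∏ i, (1 + c * μ i) ≤ (max 1 c) ^ r * ∏ i, (1 + μ i) := by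
    have key : ∀ i ∈ Finset.univ, (1 + c * μ i)
        ≤ (if μ i ≠ 0 then max 1 c else 1) * (1 + μ i) := by
      intro i _
      by_cases h : μ i = 0
      · simp [h]
      · rw [if_pos h]
        have hμi := hμ0 i
        have h2 : c ≤ max 1 c := le_max_right _ _
        nlinarith
    have hnn : ∀ i ∈ Finset.univ, (0:ℝ) ≤ 1 + c * μ i := fun i _ =>
      by have := hμ0 i; nlinarith
    have := Finset.prod_le_prod hnn key
    rw [Finset.prod_mul_distrib, Finset.prod_ite, Finset.prod_const, Finset.prod_const_one,
      mul_one] at this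
    refine this.trans (le_of_eq ?_)
    congr 2
    rw [hrdef, Fintype.card_subtype]
  -- put it together
  have hfin : ((1 + (a : ℂ) • (H * K * Hᴴ)).det).re
      ≤ (max 1 c) ^ r * ∏ i, (1 + μ i) := by
    calc ((1 + (a : ℂ) • (H * K * Hᴴ)).det).re
        ≤ ((1 + ((c : ℝ) : ℂ) • (H * Hᴴ)).det).re := step1
      _ = ∏ i, (1 + c * μ i) := step2
      _ ≤ (max 1 c) ^ r * ∏ i, (1 + μ i) := step4
  have hlog := Real.log_le_log hLpos hfin
  rw [Real.log_mul (by positivity) hp1pos.ne', Real.log_pow] at hlog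
  rw [htre, step3, hrank]
  exact hlog
end

section
/- The function f(σ²) = 2·log₂(1+σ²) + (K-2)·log₂(1 + 1/σ²) on σ² > 0, for integer K ≥ 3, is minimized at σ² = K/2 − 1 (when K > 2), where it takes the value 2·log₂(K/2) + (K-2)·log₂((K/2)/(K/2-1)); moreover this minimum value is at most 2·log₂ K + 2·log₂(e/2). -/
open Real

private lemma g_hasDeriv (k : ℝ) {x : ℝ} (hx : 0 < x) :
    HasDerivAt (fun x : ℝ => k * Real.log (1 + x) - (k - 2) * Real.log x)
      (k * (1 / (1 + x)) - (k - 2) * (1 / x)) x := by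
  have h1 : HasDerivAt (fun x : ℝ => Real.log (1 + x)) (1 / (1 + x)) x := by
    have := ((hasDerivAt_id x).const_add 1).log (by linarith : (1:ℝ) + x ≠ 0)
    simpa using this
  have h2 : HasDerivAt Real.log (1 / x) x := by
    simpa [one_div] using Real.hasDerivAt_log hx.ne'
  exact (h1.const_mul k).sub (h2.const_mul (k - 2))

private lemma g_min (k : ℝ) (hk : 3 ≤ k) {x : ℝ} (hx : 0 < x) :
    k * Real.log (1 + (k / 2 - 1)) - (k - 2) * Real.log (k / 2 - 1)
      ≤ k * Real.log (1 + x) - (k - 2) * Real.log x := by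
  have ha : (0:ℝ) < k / 2 - 1 := by linarith
  rcases le_total x (k / 2 - 1) with hxa | hax
  · have hanti : AntitoneOn (fun x : ℝ => k * Real.log (1 + x) - (k - 2) * Real.log x)
        (Set.Ioc 0 (k / 2 - 1)) := by
      apply antitoneOn_of_deriv_nonpos (convex_Ioc 0 (k / 2 - 1))
      · exact fun y hy => (g_hasDeriv k hy.1).continuousAt.continuousWithinAt
      · intro y hy
        rw [interior_Ioc] at hy
        exact (g_hasDeriv k hy.1).differentiableAt.differentiableWithinAt
      · intro y hy
        rw [interior_Ioc] at hy
        rw [(g_hasDeriv k hy.1).deriv]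
        have h1 : (0:ℝ) < 1 + y := by linarith [hy.1]
        rw [sub_nonpos, mul_one_div, mul_one_div, div_le_div_iff₀ h1 hy.1]
        nlinarith [hy.1, hy.2]
    exact hanti ⟨hx, hxa⟩ ⟨ha, le_rfl⟩ hxa
  · have hmono : MonotoneOn (fun x : ℝ => k * Real.log (1 + x) - (k - 2) * Real.log x)
        (Set.Ici (k / 2 - 1)) := by
      apply monotoneOn_of_deriv_nonneg (convex_Ici (k / 2 - 1))
      · exact fun y hy => (g_hasDeriv k (lt_of_lt_of_le ha hy)).continuousAt.continuousWithinAt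
      · intro y hy
        rw [interior_Ici] at hy
        exact (g_hasDeriv k (lt_trans ha hy)).differentiableAt.differentiableWithinAt
      · intro y hy
        rw [interior_Ici] at hy
        have hy0 : 0 < y := lt_trans ha hy
        rw [(g_hasDeriv k hy0).deriv]
        have h1 : (0:ℝ) < 1 + y := by linarith
        rw [sub_nonneg, mul_one_div, mul_one_div, div_le_div_iff₀ hy0 h1]
        nlinarith [hy0, Set.mem_Ioi.mp hy]
    exact hmono Set.self_mem_Ici (Set.mem_Ici.mpr hax) hax

/-- The quantization-noise gap term f(σ²) = 2log₂(1+σ²) + (K-2)log₂(1+1/σ²)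
is minimized over σ² > 0 at σ² = K/2 - 1, where it takes the value
2log₂(K/2) + (K-2)log₂((K/2)/(K/2-1)) ≤ 2log₂ K + 2log₂(e/2). -/
theorem diamond_quantization_min (K : ℕ) (hK : 3 ≤ K) :
    ((K:ℝ) / 2 - 1 ∈ Set.Ioi (0:ℝ)) ∧
    IsMinOn (fun x : ℝ => 2 * Real.logb 2 (1 + x) + ((K:ℝ) - 2) * Real.logb 2 (1 + 1 / x))
      (Set.Ioi 0) ((K:ℝ) / 2 - 1) ∧
    (2 * Real.logb 2 (1 + ((K:ℝ) / 2 - 1))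
        + ((K:ℝ) - 2) * Real.logb 2 (1 + 1 / ((K:ℝ) / 2 - 1))
      = 2 * Real.logb 2 ((K:ℝ) / 2)
        + ((K:ℝ) - 2) * Real.logb 2 (((K:ℝ) / 2) / ((K:ℝ) / 2 - 1))) ∧
    (2 * Real.logb 2 ((K:ℝ) / 2)
        + ((K:ℝ) - 2) * Real.logb 2 (((K:ℝ) / 2) / ((K:ℝ) / 2 - 1))
      ≤ 2 * Real.logb 2 (K:ℝ) + 2 * Real.logb 2 (Real.exp 1 / 2)) := by
  have hk : (3:ℝ) ≤ (K:ℝ) := by exact_mod_cast hK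
  set k : ℝ := (K:ℝ) with hk_def
  have ha : (0:ℝ) < k / 2 - 1 := by linarith
  have hk2 : k - 2 ≠ 0 := by linarith
  have hlog2 : (0:ℝ) < Real.log 2 := Real.log_pos one_lt_two
  have fval : ∀ x : ℝ, 0 < x →
      2 * Real.logb 2 (1 + x) + (k - 2) * Real.logb 2 (1 + 1 / x)
        = (k * Real.log (1 + x) - (k - 2) * Real.log x) / Real.log 2 := by
    intro x hx
    have h1 : (0:ℝ) < 1 + x := by linarith
    have h2 : 1 + 1 / x = (1 + x) / x := by field_simp; ring
    rw [Real.logb, Real.logb, h2, Real.log_div h1.ne' hx.ne']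
    ring
  refine ⟨ha, ?_, ?_, ?_⟩
  · intro x hx
    simp only [Set.mem_Ioi] at hx
    simp only [Set.mem_setOf_eq]
    rw [fval _ ha, fval _ hx]
    exact div_le_div_of_nonneg_right (g_min k hk hx) hlog2.le
  · have e1 : 1 + (k / 2 - 1) = k / 2 := by ring
    have e2 : 1 + 1 / (k / 2 - 1) = (k / 2) / (k / 2 - 1) := by
      field_simp; ring
    rw [e1, e2]
  · have hkpos : (0:ℝ) < k := by linarith
    have hy : (k / 2) / (k / 2 - 1) = k / (k - 2) := by
      rw [div_eq_div_iff ha.ne' hk2]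
      ring
    have hlogy : Real.log ((k / 2) / (k / 2 - 1)) ≤ 2 / (k - 2) := by
      rw [hy]
      have hypos : (0:ℝ) < k / (k - 2) := div_pos hkpos (by linarith)
      have h := Real.log_le_sub_one_of_pos hypos
      have heq : k / (k - 2) - 1 = 2 / (k - 2) := by field_simp; ring
      linarith [heq ▸ h]
    have key : (k - 2) * Real.log ((k / 2) / (k / 2 - 1)) ≤ 2 := by
      have h := mul_le_mul_of_nonneg_left hlogy (by linarith : (0:ℝ) ≤ k - 2)
      have h2 : (k - 2) * (2 / (k - 2)) = 2 := by field_simp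
      linarith
    have l1 : Real.log (k / 2) = Real.log k - Real.log 2 :=
      Real.log_div hkpos.ne' two_ne_zero
    have l2 : Real.log (Real.exp 1 / 2) = 1 - Real.log 2 := by
      rw [Real.log_div (Real.exp_ne_zero 1) two_ne_zero, Real.log_exp]
    have H : 2 * Real.log (k / 2) + (k - 2) * Real.log ((k / 2) / (k / 2 - 1))
        ≤ 2 * Real.log k + 2 * Real.log (Real.exp 1 / 2) := by
      rw [l1, l2]; linarith
    simp only [Real.logb]
    calc 2 * (Real.log (k / 2) / Real.log 2)
          + (k - 2) * (Real.log ((k / 2) / (k / 2 - 1)) / Real.log 2)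
        = (2 * Real.log (k / 2) + (k - 2) * Real.log ((k / 2) / (k / 2 - 1))) / Real.log 2 := by
          ring
      _ ≤ (2 * Real.log k + 2 * Real.log (Real.exp 1 / 2)) / Real.log 2 := by gcongr
      _ = 2 * (Real.log k / Real.log 2) + 2 * (Real.log (Real.exp 1 / 2) / Real.log 2) := by
          ring
end
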